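/- For every natural number m, the real polynomial x³ + (m+8)x² + (5m+16)x + (5m+7) has only real roots. -/

import Mathlib

open Polynomial

/-- `numIndepPartitions G i` is the number of partitions of the vertex set of `G` into
exactly `i` nonempty independent sets, encoded as the number of setoids (equivalence
relations) on `V` with exactly `i` equivalence classes, each class being an independent
set of `G`. -/
noncomputable def numIndepPartitions {V : Type*} (G : SimpleGraph V) (i : ℕ) : ℕ :=
  Nat.card {P : Setoid V // Nat.card (Quotient P) = i ∧
    ∀ c ∈ P.classes, c.Pairwise fun u v => ¬ G.Adj u v}

/-- The σ-polynomial of a finite simple graph `G`: `σ(G,x) = ∑ aᵢ xⁱ` where `aᵢ` is the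
number of partitions of the vertex set of `G` into `i` nonempty independent sets. -/
noncomputable def sigmaPoly {V : Type*} [Finite V] (G : SimpleGraph V) : Polynomial ℝ :=
  ∑ i ∈ Finset.range (Nat.card V + 1), (numIndepPartitions G i : ℝ) • X ^ i

theorem cubic_F3m_splits (m : ℕ) :
    (X ^ 3 + C ((m : ℝ) + 8) * X ^ 2 + C (5 * (m : ℝ) + 16) * X +
        C (5 * (m : ℝ) + 7)).Splits := by
  set M : ℝ := (m : ℝ) with hMdef
  have hM0 : 0 ≤ M := Nat.cast_nonneg m
  set p : Polynomial ℝ := X ^ 3 + C (M + 8) * X ^ 2 + C (5 * M + 16) * X + C (5 * M + 7)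
    with hp
  have hdeg : p.natDegree = 3 := by rw [hp]; compute_degree!
  have heval : ∀ x : ℝ, p.eval x = x^3 + (M+8)*x^2 + (5*M+16)*x + (5*M+7) := by
    intro x; simp [hp]
  have hcont : ∀ s : Set ℝ, ContinuousOn (fun x => p.eval x) s :=
    fun s => (p.continuous_aeval).continuousOn
  have ha : p.eval (-(M+9)) < 0 := by rw [heval]; nlinarith [sq_nonneg (M+9), sq_nonneg M]
  have hb : 0 < p.eval (-5) := by rw [heval]; nlinarith
  have hc : p.eval (-2) < 0 := by rw [heval]; nlinarith
  have hd : 0 < p.eval (-(1/2)) := by rw [heval]; nlinarith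
  have hab : -(M+9) ≤ -5 := by linarith
  have hbc : (-5 : ℝ) ≤ -2 := by norm_num
  have hcd : (-2 : ℝ) ≤ -(1/2) := by norm_num
  obtain ⟨r1, hr1, hr1e⟩ := intermediate_value_Ioo hab (hcont _) ⟨ha, hb⟩
  obtain ⟨r2, hr2, hr2e⟩ := intermediate_value_Ioo' hbc (hcont _) ⟨hc, hb⟩
  obtain ⟨r3, hr3, hr3e⟩ := intermediate_value_Ioo hcd (hcont _) ⟨hc, hd⟩
  have hp0 : p ≠ 0 := fun h => by simp [h] at hdeg
  have h12 : r1 ≠ r2 := ne_of_lt (lt_trans hr1.2 hr2.1)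
  have h13 : r1 ≠ r3 := ne_of_lt (lt_trans hr1.2 (lt_trans hr2.1 (lt_trans hr2.2 hr3.1)))
  have h23 : r2 ≠ r3 := ne_of_lt (lt_trans hr2.2 hr3.1)
  have hsub : ({r1, r2, r3} : Finset ℝ).val ≤ p.roots := by
    rw [Multiset.le_iff_subset (Finset.nodup _)]
    intro x hx
    simp only [Finset.insert_val, Finset.mem_val] at hx
    have hx' : x = r1 ∨ x = r2 ∨ x = r3 := by simpa using hx
    rw [mem_roots hp0]
    rcases hx' with h | h | h <;> subst h <;> assumption
  have hcard3 : ({r1, r2, r3} : Finset ℝ).card = 3 := by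
    rw [Finset.card_insert_of_notMem (by simp [h12, h13]),
      Finset.card_insert_of_notMem (by simp [h23]), Finset.card_singleton]
  have hge : 3 ≤ Multiset.card p.roots := by
    calc 3 = ({r1, r2, r3} : Finset ℝ).card := hcard3.symm
    _ ≤ Multiset.card p.roots := Multiset.card_le_card hsub
  have hle : Multiset.card p.roots ≤ 3 := hdeg ▸ p.card_roots'
  rw [splits_iff_card_roots, hdeg]
  omega
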